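/- Let n ≥ 1 and let f : ℝⁿ → ℝ be differentiable with gradient ∇f. Let x ∈ ℝⁿ, let H be an n×n real symmetric positive-definite matrix, and set d = −H ∇f(x). Let L_g > 0 be such that ‖∇f(x + τ d) − ∇f(x)‖ ≤ L_g τ ‖d‖ for all τ ∈ [0,1]. Let 0 < η₁ < 1 and define the model value q = f(x) + ∇f(x)ᵀ d + (1/2) dᵀ H⁻¹ d. Then f(x) − f(x + d) − η₁ (f(x) − q) ≥ (1/2)((2 − η₁) λ_min(H⁻¹) − L_g) ‖d‖². -/

import Mathlib

open scoped RealInnerProductSpace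

/-- Rayleigh-type lower bound for a real symmetric matrix. -/
lemma rayleigh_lower_bound {n : ℕ} (A : Matrix (Fin n) (Fin n) ℝ)
    (hA : A.IsHermitian) (m : ℝ) (hm : ∀ i, m ≤ hA.eigenvalues i)
    (v : EuclideanSpace ℝ (Fin n)) :
    m * ‖v‖ ^ 2 ≤ ⟪v, Matrix.toEuclideanLin A v⟫ := by
  set b := hA.eigenvectorBasis with hb
  have hsym : LinearMap.IsSymmetric (Matrix.toEuclideanLin A) :=
    Matrix.isHermitian_iff_isSymmetric.mp hA
  have hAb : ∀ j, Matrix.toEuclideanLin A (b j) = hA.eigenvalues j • b j := by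
    intro j
    have := hA.mulVec_eigenvectorBasis j
    apply (WithLp.equiv 2 _).injective
    funext i
    simpa [Matrix.toEuclideanLin_apply] using congrFun this i
  have key : ∀ i, b.repr (Matrix.toEuclideanLin A v) i
      = hA.eigenvalues i * b.repr v i := by
    intro i
    rw [b.repr_apply_apply, b.repr_apply_apply, ← hsym (b i) v, hAb i,
      real_inner_smul_left]
  have h1 : ⟪v, Matrix.toEuclideanLin A v⟫
      = ∑ i, hA.eigenvalues i * (b.repr v i) ^ 2 := by
    rw [← b.repr.inner_map_map v (Matrix.toEuclideanLin A v)]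
    rw [PiLp.inner_apply]
    refine Finset.sum_congr rfl fun i _ => ?_
    simp [key i]
    ring
  have h2 : ‖v‖ ^ 2 = ∑ i, (b.repr v i) ^ 2 := by
    rw [← real_inner_self_eq_norm_sq, ← b.repr.inner_map_map v v, PiLp.inner_apply]
    refine Finset.sum_congr rfl fun i _ => ?_
    simp [sq]
  rw [h1, h2, Finset.mul_sum]
  refine Finset.sum_le_sum fun i _ => ?_
  exact mul_le_mul_of_nonneg_right (hm i) (sq_nonneg _)

/-- **Ratio lemma for the regularized L-BFGS step.** Let `f : ℝⁿ → ℝ` be differentiable,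
`H` symmetric positive definite, `d = −H ∇f(x)`, suppose
`‖∇f(x + τ d) − ∇f(x)‖ ≤ L_g τ ‖d‖` for all `τ ∈ [0,1]`, and let `0 < η₁ < 1` and
`q = f(x) + ∇f(x)ᵀ d + (1/2) dᵀ H⁻¹ d`. Then
`f(x) − f(x + d) − η₁ (f(x) − q) ≥ (1/2)((2 − η₁) λ_min(H⁻¹) − L_g) ‖d‖²`. -/
theorem regularized_ratio_lower_bound (n : ℕ) (hn : 1 ≤ n)
    (f : EuclideanSpace ℝ (Fin n) → ℝ) (hf : Differentiable ℝ f)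
    (x : EuclideanSpace ℝ (Fin n))
    (H : Matrix (Fin n) (Fin n) ℝ) (hH : H.PosDef)
    (d : EuclideanSpace ℝ (Fin n))
    (hd : d = -(Matrix.toEuclideanLin H (gradient f x)))
    (L_g : ℝ) (hLg : 0 < L_g)
    (hlip : ∀ τ ∈ Set.Icc (0 : ℝ) 1,
      ‖gradient f (x + τ • d) - gradient f x‖ ≤ L_g * τ * ‖d‖)
    (η₁ : ℝ) (hη₁ : 0 < η₁) (hη₁' : η₁ < 1)
    (q : ℝ)
    (hq : q = f x + ⟪gradient f x, d⟫
        + (1 / 2) * ⟪d, Matrix.toEuclideanLin H⁻¹ d⟫) :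
    f x - f (x + d) - η₁ * (f x - q) ≥
      (1 / 2) * ((2 - η₁) *
          (Finset.univ.inf' ⟨⟨0, hn⟩, Finset.mem_univ _⟩
            fun i : Fin n => (hH.inv.1.eigenvalues i : ℝ)) - L_g) * ‖d‖ ^ 2 := by
  set g := gradient f x with hg
  set m : ℝ := Finset.univ.inf' ⟨⟨0, hn⟩, Finset.mem_univ _⟩
      (fun i : Fin n => (hH.inv.1.eigenvalues i : ℝ)) with hm
  -- inverse matrix identity
  have hdet : IsUnit H.det := isUnit_iff_ne_zero.mpr hH.det_pos.ne'
  have hinv : Matrix.toEuclideanLin H⁻¹ (Matrix.toEuclideanLin H g) = g := by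
    rw [Matrix.toEuclideanLin_apply, Matrix.toEuclideanLin_apply]
    simp [Matrix.mulVec_mulVec, Matrix.nonsing_inv_mul H hdet]
  have hAd : Matrix.toEuclideanLin H⁻¹ d = -g := by
    rw [hd, map_neg, hinv]
  -- s := ⟪d, H⁻¹ d⟫
  set s : ℝ := ⟪d, Matrix.toEuclideanLin H⁻¹ d⟫ with hs
  have hgd : ⟪g, d⟫ = -s := by
    rw [hs, hAd, real_inner_comm]
    simp
  -- Rayleigh bound
  have hray : m * ‖d‖ ^ 2 ≤ s := by
    refine rayleigh_lower_bound H⁻¹ hH.inv.1 m ?_ d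
    intro i
    exact Finset.inf'_le _ (Finset.mem_univ i)
  -- descent lemma via monotonicity
  have hderiv : ∀ τ : ℝ, HasDerivAt (fun t : ℝ => f (x + t • d))
      ⟪gradient f (x + τ • d), d⟫ τ := by
    intro τ
    have hline : HasDerivAt (fun t : ℝ => x + t • d) d τ := by
      simpa using ((hasDerivAt_id τ).smul_const d).const_add x
    have hgr := (hf (x + τ • d)).hasGradientAt
    have := hgr.hasFDerivAt.comp_hasDerivAt τ hline
    simpa [InnerProductSpace.toDual_apply_apply, Function.comp_def] using this
  set ψ : ℝ → ℝ := fun t => f (x + t • d) - t * ⟪g, d⟫ - L_g / 2 * t ^ 2 * ‖d‖ ^ 2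
    with hψdef
  have hpsideriv : ∀ τ : ℝ, HasDerivAt ψ
      (⟪gradient f (x + τ • d), d⟫ - ⟪g, d⟫ - L_g * τ * ‖d‖ ^ 2) τ := by
    intro τ
    have h1 := (hderiv τ).sub ((hasDerivAt_id τ).mul_const ⟪g, d⟫)
    have h2 : HasDerivAt (fun t : ℝ => L_g / 2 * t ^ 2 * ‖d‖ ^ 2)
        (L_g * τ * ‖d‖ ^ 2) τ := by
      have := (((hasDerivAt_pow 2 τ).const_mul (L_g / 2)).mul_const (‖d‖ ^ 2))
      refine this.congr_deriv ?_
      ring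
    have := h1.sub h2
    refine this.congr_deriv ?_
    ring
  have hanti : AntitoneOn ψ (Set.Icc 0 1) := by
    refine antitoneOn_of_deriv_nonpos (convex_Icc 0 1) ?_ ?_ ?_
    · exact (fun t _ => ((hpsideriv t).differentiableAt).continuousAt.continuousWithinAt)
    · exact fun t _ => ((hpsideriv t).differentiableAt).differentiableWithinAt
    · intro t ht
      rw [interior_Icc] at ht
      rw [(hpsideriv t).deriv]
      have hmem : t ∈ Set.Icc (0 : ℝ) 1 := ⟨le_of_lt ht.1, le_of_lt ht.2⟩
      have hcs : ⟪gradient f (x + t • d), d⟫ - ⟪g, d⟫ ≤ L_g * t * ‖d‖ ^ 2 := by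
        have h1 : ⟪gradient f (x + t • d) - g, d⟫
            ≤ ‖gradient f (x + t • d) - g‖ * ‖d‖ := real_inner_le_norm _ _
        have h2 := hlip t hmem
        have h3 : ‖gradient f (x + t • d) - g‖ * ‖d‖ ≤ L_g * t * ‖d‖ * ‖d‖ :=
          mul_le_mul_of_nonneg_right h2 (norm_nonneg d)
        rw [inner_sub_left] at h1
        nlinarith
      linarith
  have hψ10 : ψ 1 ≤ ψ 0 :=
    hanti (Set.mem_Icc.mpr ⟨le_refl 0, zero_le_one⟩)
      (Set.mem_Icc.mpr ⟨zero_le_one, le_refl 1⟩) zero_le_one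
  have hψ0 : ψ 0 = f x := by simp [hψdef]
  have hψ1 : ψ 1 = f (x + d) - ⟪g, d⟫ - L_g / 2 * ‖d‖ ^ 2 := by simp [hψdef]
  have hdesc : f (x + d) ≤ f x + ⟪g, d⟫ + L_g / 2 * ‖d‖ ^ 2 := by
    rw [hψ0, hψ1] at hψ10; linarith
  -- put everything together
  rw [hq, ← hg, ← hs, hgd] at *
  have hcoef : (0 : ℝ) ≤ 1 - η₁ / 2 := by linarith
  nlinarith [mul_le_mul_of_nonneg_left hray hcoef]
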